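/- Let s = δ·t·n₁n₂n₃ and fix r ∈ S. Then the differences of mean factorization lengths along the shifted subsequence are bounded: there exists a constant C such that |μ(ks + r) − μ(ks)| ≤ C for all integers k ≥ 1. -/

import Mathlib

/-- The (finite) set of factorizations of `n` in the numerical semigroup `⟨n₁, n₂, n₃⟩`:
triples `(a₁, a₂, a₃) ∈ ℕ³` with `a₁n₁ + a₂n₂ + a₃n₃ = n`.  (Each coordinate is at most `n`
whenever the generators are positive, so the bounding box `[0,n]³` captures all of them.) -/
def Zf (n₁ n₂ n₃ n : ℕ) : Finset (ℕ × ℕ × ℕ) :=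
  (Finset.range (n + 1) ×ˢ Finset.range (n + 1) ×ˢ Finset.range (n + 1)).filter
    (fun a => a.1 * n₁ + a.2.1 * n₂ + a.2.2 * n₃ = n)

/-- The length of a factorization. -/
def len (a : ℕ × ℕ × ℕ) : ℕ := a.1 + a.2.1 + a.2.2

/-- Membership in the numerical semigroup `⟨n₁, n₂, n₃⟩`. -/
def inS (n₁ n₂ n₃ n : ℕ) : Prop := ∃ a₁ a₂ a₃ : ℕ, a₁ * n₁ + a₂ * n₂ + a₃ * n₃ = n

/-- `fmul n₁ n₂ n₃ n ℓ` is the number of factorizations of `n` having length `ℓ`. -/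
def fmul (n₁ n₂ n₃ n ℓ : ℕ) : ℕ := ((Zf n₁ n₂ n₃ n).filter (fun a => len a = ℓ)).card

/-- The mode frequency `ν(n)`: the maximum, over all lengths `ℓ ∈ ℕ`, of the number of
factorizations of `n` of length `ℓ`. -/
noncomputable def modeFreq (n₁ n₂ n₃ n : ℕ) : ℕ := sSup (Set.range (fmul n₁ n₂ n₃ n))

/-- The set `γ(n)` of mode factorization lengths. -/
def modeSet (n₁ n₂ n₃ n : ℕ) : Set ℕ := {ℓ | fmul n₁ n₂ n₃ n ℓ = modeFreq n₁ n₂ n₃ n}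

/-- The mean factorization length `μ(n)`. -/
def meanLen (n₁ n₂ n₃ n : ℕ) : ℚ :=
  (∑ z ∈ Zf n₁ n₂ n₃ n, (len z : ℚ)) / ((Zf n₁ n₂ n₃ n).card : ℚ)

/-- The lengths of all factorizations of `n`, counted with multiplicity, in nondecreasing
order. -/
def sortedLengths (n₁ n₂ n₃ n : ℕ) : List ℕ :=
  Multiset.sort ((Zf n₁ n₂ n₃ n).val.map len) (· ≤ ·)

/-- The median factorization length `η(n)`: with the lengths listed with multiplicity in
nondecreasing order as `ℓ₁ ≤ ⋯ ≤ ℓ_M`, it is `ℓ_{(M+1)/2}` for odd `M` and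
`(ℓ_{M/2} + ℓ_{M/2+1})/2` for even `M`. -/
def medianLen (n₁ n₂ n₃ n : ℕ) : ℚ :=
  let l := sortedLengths n₁ n₂ n₃ n
  if l.length % 2 = 1 then (l.getD (l.length / 2) 0 : ℚ)
  else ((l.getD (l.length / 2 - 1) 0 : ℚ) + (l.getD (l.length / 2) 0 : ℚ)) / 2

lemma mem_Zf_iff {n₁ n₂ n₃ : ℕ} (h₁ : 0 < n₁) (h₂ : 0 < n₂) (h₃ : 0 < n₃) {n : ℕ}
    {a : ℕ × ℕ × ℕ} : a ∈ Zf n₁ n₂ n₃ n ↔ a.1 * n₁ + a.2.1 * n₂ + a.2.2 * n₃ = n := by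
  unfold Zf
  simp only [Finset.mem_filter, Finset.mem_product, Finset.mem_range]
  constructor
  · exact fun h => h.2
  · intro h
    have e1 : a.1 ≤ a.1 * n₁ := Nat.le_mul_of_pos_right _ h₁
    have e2 : a.2.1 ≤ a.2.1 * n₂ := Nat.le_mul_of_pos_right _ h₂
    have e3 : a.2.2 ≤ a.2.2 * n₃ := Nat.le_mul_of_pos_right _ h₃
    exact ⟨⟨by linarith, by linarith, by linarith⟩, h⟩

lemma len_le_of_mem_Zf {n₁ n₂ n₃ : ℕ} (h₁ : 0 < n₁) (h₂ : 0 < n₂) (h₃ : 0 < n₃) {n : ℕ}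
    {a : ℕ × ℕ × ℕ} (ha : a ∈ Zf n₁ n₂ n₃ n) : len a ≤ n := by
  rw [mem_Zf_iff h₁ h₂ h₃] at ha
  have e1 : a.1 ≤ a.1 * n₁ := Nat.le_mul_of_pos_right _ h₁
  have e2 : a.2.1 ≤ a.2.1 * n₂ := Nat.le_mul_of_pos_right _ h₂
  have e3 : a.2.2 ≤ a.2.2 * n₃ := Nat.le_mul_of_pos_right _ h₃
  unfold len; linarith

lemma Zf_eq_of_12 {n₁ n₂ n₃ n : ℕ} (h₃ : 0 < n₃) {a a' : ℕ × ℕ × ℕ}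
    (ha : a ∈ Zf n₁ n₂ n₃ n) (ha' : a' ∈ Zf n₁ n₂ n₃ n)
    (e1 : a.1 = a'.1) (e2 : a.2.1 = a'.2.1) : a = a' := by
  unfold Zf at ha ha'
  simp only [Finset.mem_filter] at ha ha'
  have h := ha.2; have h' := ha'.2
  have : a.2.2 * n₃ = a'.2.2 * n₃ := by rw [e1, e2] at h; linarith
  have e3 : a.2.2 = a'.2.2 := Nat.eq_of_mul_eq_mul_right h₃ this
  exact Prod.ext e1 (Prod.ext e2 e3)

lemma Zf_eq_of_13 {n₁ n₂ n₃ n : ℕ} (h₂ : 0 < n₂) {a a' : ℕ × ℕ × ℕ}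
    (ha : a ∈ Zf n₁ n₂ n₃ n) (ha' : a' ∈ Zf n₁ n₂ n₃ n)
    (e1 : a.1 = a'.1) (e3 : a.2.2 = a'.2.2) : a = a' := by
  unfold Zf at ha ha'
  simp only [Finset.mem_filter] at ha ha'
  have h := ha.2; have h' := ha'.2
  have : a.2.1 * n₂ = a'.2.1 * n₂ := by rw [e1, e3] at h; linarith
  have e2 : a.2.1 = a'.2.1 := Nat.eq_of_mul_eq_mul_right h₂ this
  exact Prod.ext e1 (Prod.ext e2 e3)

lemma snd_lt_of_mem_Zf {n₁ n₂ n₃ n : ℕ} {a : ℕ × ℕ × ℕ} (ha : a ∈ Zf n₁ n₂ n₃ n) :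
    a.1 < n + 1 ∧ a.2.1 < n + 1 ∧ a.2.2 < n + 1 := by
  unfold Zf at ha
  simp only [Finset.mem_filter, Finset.mem_product, Finset.mem_range] at ha
  exact ha.1

lemma card_slice₁ {n₁ n₂ n₃ : ℕ} (h₃ : 0 < n₃) (n b : ℕ) :
    ((Zf n₁ n₂ n₃ n).filter fun a => a.1 < b).card ≤ b * (n + 1) := by
  have h : ((Zf n₁ n₂ n₃ n).filter fun a => a.1 < b).card ≤
      (Finset.range b ×ˢ Finset.range (n + 1)).card := by
    apply Finset.card_le_card_of_injOn (fun a => (a.1, a.2.1))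
    · intro a ha
      simp only [Finset.mem_coe, Finset.mem_filter] at ha
      have := snd_lt_of_mem_Zf ha.1
      simp only [Finset.mem_coe, Finset.mem_product, Finset.mem_range]
      exact ⟨ha.2, this.2.1⟩
    · intro a ha a' ha' h
      simp only [Finset.coe_filter, Set.mem_setOf_eq] at ha ha'
      simp only [Prod.mk.injEq] at h
      exact Zf_eq_of_12 h₃ ha.1 ha'.1 h.1 h.2
  simpa [Finset.card_product] using h

lemma card_slice₂ {n₁ n₂ n₃ : ℕ} (h₃ : 0 < n₃) (n b : ℕ) :
    ((Zf n₁ n₂ n₃ n).filter fun a => a.2.1 < b).card ≤ b * (n + 1) := by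
  have h : ((Zf n₁ n₂ n₃ n).filter fun a => a.2.1 < b).card ≤
      (Finset.range b ×ˢ Finset.range (n + 1)).card := by
    apply Finset.card_le_card_of_injOn (fun a => (a.2.1, a.1))
    · intro a ha
      simp only [Finset.mem_coe, Finset.mem_filter] at ha
      have := snd_lt_of_mem_Zf ha.1
      simp only [Finset.mem_coe, Finset.mem_product, Finset.mem_range]
      exact ⟨ha.2, this.1⟩
    · intro a ha a' ha' h
      simp only [Finset.coe_filter, Set.mem_setOf_eq] at ha ha'
      simp only [Prod.mk.injEq] at h
      exact Zf_eq_of_12 h₃ ha.1 ha'.1 h.2 h.1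
  simpa [Finset.card_product] using h

lemma card_slice₃ {n₁ n₂ n₃ : ℕ} (h₂ : 0 < n₂) (n b : ℕ) :
    ((Zf n₁ n₂ n₃ n).filter fun a => a.2.2 < b).card ≤ b * (n + 1) := by
  have h : ((Zf n₁ n₂ n₃ n).filter fun a => a.2.2 < b).card ≤
      (Finset.range b ×ˢ Finset.range (n + 1)).card := by
    apply Finset.card_le_card_of_injOn (fun a => (a.2.2, a.1))
    · intro a ha
      simp only [Finset.mem_coe, Finset.mem_filter] at ha
      have := snd_lt_of_mem_Zf ha.1
      simp only [Finset.mem_coe, Finset.mem_product, Finset.mem_range]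
      exact ⟨ha.2, this.1⟩
    · intro a ha a' ha' h
      simp only [Finset.coe_filter, Set.mem_setOf_eq] at ha ha'
      simp only [Prod.mk.injEq] at h
      exact Zf_eq_of_13 h₂ ha.1 ha'.1 h.2 h.1
  simpa [Finset.card_product] using h

lemma card_Zf_lower {n₁ n₂ n₃ : ℕ} (h₁ : 0 < n₁) (h₂ : 2 ≤ n₂) (h₃ : n₂ ≤ n₃) (q : ℕ) :
    q * q ≤ (Zf n₁ n₂ n₃ (q * (n₁ * n₂ * n₃))).card := by
  have h₂0 : 0 < n₂ := by omega
  have h₃0 : 0 < n₃ := by omega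
  have hsum : n₂ + n₃ ≤ n₂ * n₃ := by
    have h2 : 2 * n₃ ≤ n₂ * n₃ := Nat.mul_le_mul_right _ h₂
    linarith
  have key : (Finset.range q ×ˢ Finset.range q).card ≤
      (Zf n₁ n₂ n₃ (q * (n₁ * n₂ * n₃))).card := by
    apply Finset.card_le_card_of_injOn
      (fun p => (q * (n₂ * n₃) - (p.1 * n₂ + p.2 * n₃), p.1 * n₁, p.2 * n₁))
    · intro p hp
      simp only [Finset.mem_coe, Finset.mem_product, Finset.mem_range] at hp
      have hy : p.1 * n₂ + p.2 * n₃ ≤ q * (n₂ * n₃) := by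
        calc p.1 * n₂ + p.2 * n₃ ≤ (p.1 + 1) * n₂ + (p.2 + 1) * n₃ := by
              apply Nat.add_le_add <;> apply Nat.mul_le_mul_right <;> omega
          _ ≤ q * n₂ + q * n₃ :=
              Nat.add_le_add (Nat.mul_le_mul_right _ hp.1) (Nat.mul_le_mul_right _ hp.2)
          _ = q * (n₂ + n₃) := by ring
          _ ≤ q * (n₂ * n₃) := Nat.mul_le_mul_left _ hsum
      rw [Finset.mem_coe, mem_Zf_iff h₁ h₂0 h₃0]
      have hy1 : (p.1 * n₂ + p.2 * n₃) * n₁ ≤ q * (n₂ * n₃) * n₁ :=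
        Nat.mul_le_mul_right _ hy
      calc (q * (n₂ * n₃) - (p.1 * n₂ + p.2 * n₃)) * n₁ + p.1 * n₁ * n₂ + p.2 * n₁ * n₃
          = (q * (n₂ * n₃) - (p.1 * n₂ + p.2 * n₃)) * n₁ + (p.1 * n₂ + p.2 * n₃) * n₁ := by
            ring
        _ = q * (n₂ * n₃) * n₁ - (p.1 * n₂ + p.2 * n₃) * n₁ + (p.1 * n₂ + p.2 * n₃) * n₁ := by
            rw [Nat.sub_mul]
        _ = q * (n₂ * n₃) * n₁ := Nat.sub_add_cancel hy1
        _ = q * (n₁ * n₂ * n₃) := by ring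
    · intro p hp p' hp' h
      simp only [Prod.mk.injEq] at h
      have e1 : p.1 = p'.1 := Nat.eq_of_mul_eq_mul_right h₁ h.2.1
      have e2 : p.2 = p'.2 := Nat.eq_of_mul_eq_mul_right h₁ h.2.2
      exact Prod.ext e1 e2
  simpa [Finset.card_product] using key

lemma mean_diff_id (a b c d m : ℚ) (hm : m ≠ 0) (hd : d + m ≠ 0) :
    (a + m * b + c) / (d + m) - a / m = (m * b + c - (a / m) * d) / (d + m) := by
  field_simp
  ring

/-- For fixed r ∈ S, the differences |μ(ks + r) − μ(ks)| are bounded over k ≥ 1. -/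
theorem mean_shift_bounded (n₁ n₂ n₃ : ℕ) (h₀ : 0 < n₁) (h₁ : n₁ < n₂) (h₂ : n₂ < n₃)
    (hg : Nat.gcd n₁ (Nat.gcd n₂ n₃) = 1)
    (δ t : ℕ) (hδ : δ = Nat.gcd (n₂ - n₁) (n₃ - n₂)) (ht : t = n₂ * (n₃ - n₁) / δ)
    (s : ℕ) (hs : s = δ * t * n₁ * n₂ * n₃) (r : ℕ) (hr : inS n₁ n₂ n₃ r) :
    ∃ C : ℚ, ∀ k : ℕ, 1 ≤ k →
      |meanLen n₁ n₂ n₃ (k * s + r) - meanLen n₁ n₂ n₃ (k * s)| ≤ C := by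
  obtain ⟨b₁, b₂, b₃, hb⟩ := hr
  have h2 : 0 < n₂ := lt_trans h₀ h₁
  have h3 : 0 < n₃ := lt_trans h2 h₂
  have hδpos : 0 < δ := by
    rw [hδ]; exact Nat.gcd_pos_of_pos_left _ (by omega)
  have hdvd : δ ∣ n₃ - n₁ := by
    have d1 : δ ∣ n₂ - n₁ := hδ ▸ Nat.gcd_dvd_left _ _
    have d2 : δ ∣ n₃ - n₂ := hδ ▸ Nat.gcd_dvd_right _ _
    have e : n₃ - n₁ = (n₂ - n₁) + (n₃ - n₂) := by omega
    rw [e]; exact dvd_add d1 d2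
  have htpos : 0 < t := by
    rw [ht]
    exact Nat.div_pos (Nat.le_of_dvd (Nat.mul_pos h2 (by omega)) (hdvd.mul_left n₂)) hδpos
  have hqt : 0 < δ * t := Nat.mul_pos hδpos htpos
  set L := b₁ + b₂ + b₃ with hLdef
  have hLr : L ≤ r := by
    have e1 : b₁ ≤ b₁ * n₁ := Nat.le_mul_of_pos_right _ h₀
    have e2 : b₂ ≤ b₂ * n₂ := Nat.le_mul_of_pos_right _ h2
    have e3 : b₃ ≤ b₃ * n₃ := Nat.le_mul_of_pos_right _ h3
    rw [hLdef]; linarith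
  refine ⟨(r : ℚ) + 2 * r * (s + r + 1) * (s + r), ?_⟩
  intro k hk
  have hk0 : 0 < k := hk
  set n := k * s with hn
  set Z₀ := Zf n₁ n₂ n₃ n with hZ₀
  set B := Zf n₁ n₂ n₃ (n + r) with hB
  set f : ℕ × ℕ × ℕ → ℕ × ℕ × ℕ := fun a => (a.1 + b₁, a.2.1 + b₂, a.2.2 + b₃) with hf
  set A := Z₀.image f with hA
  have hfinj : ∀ x ∈ Z₀, ∀ y ∈ Z₀, f x = f y → x = y := by
    intro x _ y _ h
    simp only [hf, Prod.mk.injEq] at h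
    exact Prod.ext (by omega) (Prod.ext (by omega) (by omega))
  have hAB : A ⊆ B := by
    intro x hx
    rw [hA, Finset.mem_image] at hx
    obtain ⟨a, ha, rfl⟩ := hx
    rw [hZ₀, mem_Zf_iff h₀ h2 h3] at ha
    rw [hB, mem_Zf_iff h₀ h2 h3]
    show (a.1 + b₁) * n₁ + (a.2.1 + b₂) * n₂ + (a.2.2 + b₃) * n₃ = n + r
    calc (a.1 + b₁) * n₁ + (a.2.1 + b₂) * n₂ + (a.2.2 + b₃) * n₃
        = (a.1 * n₁ + a.2.1 * n₂ + a.2.2 * n₃) + (b₁ * n₁ + b₂ * n₂ + b₃ * n₃) := by ring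
      _ = n + r := by rw [ha, hb]
  set M := Z₀.card with hM
  set e := (B \ A).card with he
  have hMk : k * k ≤ M := by
    have hq : (k * (δ * t)) * (n₁ * n₂ * n₃) = n := by rw [hn, hs]; ring
    have := card_Zf_lower h₀ (by omega) (le_of_lt h₂) (k * (δ * t))
    rw [hq] at this
    calc k * k ≤ (k * (δ * t)) * (k * (δ * t)) := by
          apply Nat.mul_le_mul <;> exact Nat.le_mul_of_pos_right _ hqt
      _ ≤ M := this
  have hM0 : 0 < M := lt_of_lt_of_le (Nat.mul_pos hk0 hk0) hMk
  have hcardA : A.card = M := by rw [hA]; exact Finset.card_image_of_injOn hfinj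
  have hcardB : B.card = e + M := by
    rw [he, ← hcardA]
    exact (Finset.card_sdiff_add_card_eq_card hAB).symm
  -- bound on e
  have heub : e ≤ L * (n + r + 1) := by
    have hsub : B \ A ⊆ ((B.filter fun a => a.1 < b₁) ∪ (B.filter fun a => a.2.1 < b₂)) ∪
        (B.filter fun a => a.2.2 < b₃) := by
      intro a ha
      rw [Finset.mem_sdiff] at ha
      by_cases hc : b₁ ≤ a.1 ∧ b₂ ≤ a.2.1 ∧ b₃ ≤ a.2.2
      · exfalso
        apply ha.2
        rw [hA, Finset.mem_image]
        refine ⟨(a.1 - b₁, a.2.1 - b₂, a.2.2 - b₃), ?_, ?_⟩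
        · rw [hZ₀, mem_Zf_iff h₀ h2 h3]
          have ha' := (mem_Zf_iff h₀ h2 h3).mp ha.1
          have e1 : (a.1 - b₁) * n₁ + b₁ * n₁ = a.1 * n₁ := by
            rw [← Nat.add_mul]; congr 1; omega
          have e2 : (a.2.1 - b₂) * n₂ + b₂ * n₂ = a.2.1 * n₂ := by
            rw [← Nat.add_mul]; congr 1; omega
          have e3 : (a.2.2 - b₃) * n₃ + b₃ * n₃ = a.2.2 * n₃ := by
            rw [← Nat.add_mul]; congr 1; omega
          show (a.1 - b₁) * n₁ + (a.2.1 - b₂) * n₂ + (a.2.2 - b₃) * n₃ = n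
          linarith
        · simp only [hf]
          refine Prod.ext ?_ (Prod.ext ?_ ?_) <;> simp <;> omega
      · have hor : a.1 < b₁ ∨ a.2.1 < b₂ ∨ a.2.2 < b₃ := by omega
        simp only [Finset.mem_union, Finset.mem_filter]
        rcases hor with h | h | h
        · exact Or.inl (Or.inl ⟨ha.1, h⟩)
        · exact Or.inl (Or.inr ⟨ha.1, h⟩)
        · exact Or.inr ⟨ha.1, h⟩
    calc e ≤ (((B.filter fun a => a.1 < b₁) ∪ (B.filter fun a => a.2.1 < b₂)) ∪
        (B.filter fun a => a.2.2 < b₃)).card := Finset.card_le_card hsub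
      _ ≤ ((B.filter fun a => a.1 < b₁) ∪ (B.filter fun a => a.2.1 < b₂)).card +
          (B.filter fun a => a.2.2 < b₃).card := Finset.card_union_le _ _
      _ ≤ (B.filter fun a => a.1 < b₁).card + (B.filter fun a => a.2.1 < b₂).card +
          (B.filter fun a => a.2.2 < b₃).card := by
            have := Finset.card_union_le (B.filter fun a => a.1 < b₁)
              (B.filter fun a => a.2.1 < b₂)
            omega
      _ ≤ b₁ * (n + r + 1) + b₂ * (n + r + 1) + b₃ * (n + r + 1) := by
          rw [hB]
          exact Nat.add_le_add (Nat.add_le_add (card_slice₁ h3 _ _) (card_slice₂ h3 _ _))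
            (card_slice₃ h2 _ _)
      _ = L * (n + r + 1) := by rw [hLdef]; ring
  -- nat key inequality
  have hkey : 2 * e * (n + r) ≤ 2 * r * (s + r + 1) * (s + r) * (k * k) := by
    have he1 : e ≤ r * (n + r + 1) :=
      le_trans heub (Nat.mul_le_mul_right _ hLr)
    have hkr : r + 1 ≤ k * r + k :=
      Nat.add_le_add (Nat.le_mul_of_pos_left r hk0) hk
    have h1 : n + r + 1 ≤ k * (s + r + 1) := by
      rw [hn]
      calc k * s + r + 1 ≤ k * s + (k * r + k) := by omega
        _ = k * (s + r + 1) := by ring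
    have h2' : n + r ≤ k * (s + r) := by
      rw [hn]
      calc k * s + r ≤ k * s + k * r := by
            have : r ≤ k * r := Nat.le_mul_of_pos_left r hk0
            omega
        _ = k * (s + r) := by ring
    calc 2 * e * (n + r) ≤ 2 * (r * (k * (s + r + 1))) * (k * (s + r)) := by
          apply Nat.mul_le_mul _ h2'
          apply Nat.mul_le_mul_left
          exact le_trans he1 (Nat.mul_le_mul_left _ h1)
      _ = 2 * r * (s + r + 1) * (s + r) * (k * k) := by ring
  -- rational part
  set S₀ : ℚ := ∑ z ∈ Z₀, (len z : ℚ) with hS₀def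
  set SE : ℚ := ∑ z ∈ B \ A, (len z : ℚ) with hSEdef
  have hmmQ : (0 : ℚ) < (M : ℚ) := by exact_mod_cast hM0
  have heeQ : (0 : ℚ) ≤ (e : ℚ) := by positivity
  have hden : (0 : ℚ) < (e : ℚ) + (M : ℚ) := by linarith
  have hS₀ub : S₀ ≤ (n : ℚ) * (M : ℚ) := by
    have h := Finset.sum_le_card_nsmul Z₀ (fun z => (len z : ℚ)) (n : ℚ)
      (fun z hz => by simpa using (Nat.cast_le (α := ℚ)).mpr (len_le_of_mem_Zf h₀ h2 h3 (hZ₀ ▸ hz)))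
    rw [nsmul_eq_mul] at h
    rw [hS₀def]
    calc (∑ z ∈ Z₀, (len z : ℚ)) ≤ (Z₀.card : ℚ) * (n : ℚ) := h
      _ = (n : ℚ) * (M : ℚ) := by rw [hM]; ring
  have hS₀0 : 0 ≤ S₀ := Finset.sum_nonneg (fun z _ => by positivity)
  have hSEub : SE ≤ (e : ℚ) * ((n : ℚ) + (r : ℚ)) := by
    have h := Finset.sum_le_card_nsmul (B \ A) (fun z => (len z : ℚ)) ((n : ℚ) + (r : ℚ))
      (fun z hz => by
        have hz' : z ∈ B := (Finset.mem_sdiff.mp hz).1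
        have := len_le_of_mem_Zf h₀ h2 h3 (hB ▸ hz')
        simpa using (Nat.cast_le (α := ℚ)).mpr this)
    rw [nsmul_eq_mul] at h
    rw [hSEdef]
    calc (∑ z ∈ B \ A, (len z : ℚ)) ≤ ((B \ A).card : ℚ) * ((n : ℚ) + (r : ℚ)) := h
      _ = (e : ℚ) * ((n : ℚ) + (r : ℚ)) := by rw [he]
  have hSE0 : 0 ≤ SE := Finset.sum_nonneg (fun z _ => by positivity)
  have hsumA : ∑ z ∈ A, (len z : ℚ) = S₀ + (M : ℚ) * (L : ℚ) := by
    rw [hA, Finset.sum_image hfinj]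
    have hlf : ∀ z : ℕ × ℕ × ℕ, len (f z) = len z + L := by
      intro z; simp only [hf, len, hLdef]; omega
    calc ∑ z ∈ Z₀, (len (f z) : ℚ) = ∑ z ∈ Z₀, ((len z : ℚ) + (L : ℚ)) := by
          apply Finset.sum_congr rfl
          intro z _
          rw [hlf z]; push_cast; ring
      _ = S₀ + (Z₀.card : ℚ) * (L : ℚ) := by
          rw [Finset.sum_add_distrib, Finset.sum_const, nsmul_eq_mul, hS₀def]
      _ = S₀ + (M : ℚ) * (L : ℚ) := by rw [hM]
  have hsumB : ∑ z ∈ B, (len z : ℚ) = S₀ + (M : ℚ) * (L : ℚ) + SE := by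
    rw [← Finset.sum_sdiff hAB, hsumA, hSEdef]; ring
  have hmean1 : meanLen n₁ n₂ n₃ (n + r) = (S₀ + (M : ℚ) * (L : ℚ) + SE) / ((e : ℚ) + (M : ℚ)) := by
    unfold meanLen
    rw [← hB, hsumB, hcardB]
    push_cast
    ring_nf
  have hmean0 : meanLen n₁ n₂ n₃ n = S₀ / (M : ℚ) := by
    unfold meanLen
    rw [← hZ₀, ← hS₀def, ← hM]
  clear_value S₀ SE M e A B Z₀ n f L
  clear hb hδ ht hg hdvd hsumA hsumB hcardA hcardB heub hAB hfinj
  clear hS₀def hSEdef hZ₀ hB hA hM he hf hn hs hLdef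
  have hmm' : (M : ℚ) ≠ 0 := ne_of_gt hmmQ
  have hden' : (e : ℚ) + (M : ℚ) ≠ 0 := ne_of_gt hden
  have hid := mean_diff_id S₀ (L : ℚ) SE (e : ℚ) (M : ℚ) hmm' hden'
  set μ₀ : ℚ := S₀ / (M : ℚ) with hμ₀def
  clear_value μ₀
  have hμub : μ₀ ≤ (n : ℚ) := by
    rw [hμ₀def, div_le_iff₀ hmmQ]
    linarith
  have hμ0 : 0 ≤ μ₀ := by rw [hμ₀def]; exact div_nonneg hS₀0 hmmQ.le
  clear hμ₀def
  have hLQ : (L : ℚ) ≤ (r : ℚ) := by exact_mod_cast hLr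
  have hr0 : (0 : ℚ) ≤ (r : ℚ) := by positivity
  have hn0 : (0 : ℚ) ≤ (n : ℚ) := by positivity
  have habs : |(M : ℚ) * (L : ℚ) + SE - μ₀ * (e : ℚ)|
      ≤ (M : ℚ) * (r : ℚ) + 2 * (e : ℚ) * ((n : ℚ) + (r : ℚ)) := by
    have hML : (M : ℚ) * (L : ℚ) ≤ (M : ℚ) * (r : ℚ) :=
      mul_le_mul_of_nonneg_left hLQ hmmQ.le
    have hML0 : 0 ≤ (M : ℚ) * (L : ℚ) := by positivity
    have hμe : μ₀ * (e : ℚ) ≤ ((n : ℚ) + (r : ℚ)) * (e : ℚ) :=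
      mul_le_mul_of_nonneg_right (by linarith) heeQ
    have hμe0 : 0 ≤ μ₀ * (e : ℚ) := mul_nonneg hμ0 heeQ
    have hx : (0 : ℚ) ≤ (e : ℚ) * ((n : ℚ) + (r : ℚ)) := by positivity
    have hMr : (0 : ℚ) ≤ (M : ℚ) * (r : ℚ) := by positivity
    rw [abs_le]
    constructor <;> linarith
  have p1 : (M : ℚ) * (r : ℚ) / ((e : ℚ) + (M : ℚ)) ≤ (r : ℚ) := by
    rw [div_le_iff₀ hden]
    have := mul_nonneg hr0 heeQ
    linarith
  have p2 : 2 * (e : ℚ) * ((n : ℚ) + (r : ℚ)) / ((e : ℚ) + (M : ℚ))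
      ≤ 2 * (r : ℚ) * ((s : ℚ) + (r : ℚ) + 1) * ((s : ℚ) + (r : ℚ)) := by
    rw [div_le_iff₀ hden]
    have hkkM : ((k : ℚ) * (k : ℚ)) ≤ (e : ℚ) + (M : ℚ) := by
      have h' : ((k * k : ℕ) : ℚ) ≤ (M : ℚ) := Nat.cast_le.mpr hMk
      push_cast at h'
      linarith
    have hkeyQ : (2 : ℚ) * (e : ℚ) * ((n : ℚ) + (r : ℚ))
        ≤ 2 * (r : ℚ) * ((s : ℚ) + (r : ℚ) + 1) * ((s : ℚ) + (r : ℚ)) * ((k : ℚ) * (k : ℚ)) := by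
      exact_mod_cast hkey
    have hc0 : (0 : ℚ) ≤ 2 * (r : ℚ) * ((s : ℚ) + (r : ℚ) + 1) * ((s : ℚ) + (r : ℚ)) := by
      positivity
    have := mul_le_mul_of_nonneg_left hkkM hc0
    linarith
  calc |meanLen n₁ n₂ n₃ (n + r) - meanLen n₁ n₂ n₃ n|
      = |((M : ℚ) * (L : ℚ) + SE - μ₀ * (e : ℚ)) / ((e : ℚ) + (M : ℚ))| := by
        rw [hmean1, hmean0, hid]
    _ = |(M : ℚ) * (L : ℚ) + SE - μ₀ * (e : ℚ)| / ((e : ℚ) + (M : ℚ)) := by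
        rw [abs_div, abs_of_pos hden]
    _ ≤ ((M : ℚ) * (r : ℚ) + 2 * (e : ℚ) * ((n : ℚ) + (r : ℚ))) / ((e : ℚ) + (M : ℚ)) := by
        gcongr
    _ = (M : ℚ) * (r : ℚ) / ((e : ℚ) + (M : ℚ))
        + 2 * (e : ℚ) * ((n : ℚ) + (r : ℚ)) / ((e : ℚ) + (M : ℚ)) := add_div _ _ _
    _ ≤ (r : ℚ) + 2 * (r : ℚ) * ((s : ℚ) + (r : ℚ) + 1) * ((s : ℚ) + (r : ℚ)) :=
        add_le_add p1 p2
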